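/- (Channel simulation from a bin index.) Let 𝒳 be a finite set with |𝒳| ≥ 2, let X([n]) be n i.i.d. copies of a uniform random variable on 𝒳, let R < log₂|𝒳| and δ > 0, and let 𝔅 : 𝒳ⁿ → [⌈2^{nR}⌉] be a uniformly random binning (each sequence mapped independently and uniformly to a bin index); set B = 𝔅(X([n])). Let 𝒯 be a finite set with |𝒯| = ⌈2^{n(log₂|𝒳| − R + δ)}⌉ and let T be uniform on 𝒯, independent of everything else. Then there exists η > 0 such that for all sufficiently large n, for each realization of 𝔅 there exists a deterministic function φ : 𝒯 × [⌈2^{nR}⌉] → 𝒳ⁿ such that, defining the simulated channel p̃_{X([n])|B}(xⁿ | b) = (1/|𝒯|)·∑_{t∈𝒯} 𝟙[φ(t,b) = xⁿ], one has 𝔼_𝔅 ‖ p_B · p_{X([n])|B} − p_B · p̃_{X([n])|B} ‖₁ ≤ 2^{−ηn}, where p_B · p_{X([n])|B} denotes the joint pmf of (B, X([n])) and the expectation is over the random binning. -/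

import Mathlib

open Finset

noncomputable section

/-- Number of bins `⌈2^{nR}⌉`. -/
def nbR (R : ℝ) (n : ℕ) : ℕ := ⌈(2 : ℝ) ^ ((n : ℝ) * R)⌉₊

/-- Size of the external randomness alphabet `|𝒯| = ⌈2^{n(log₂ q − R + δ)}⌉`
(with `q = |𝒳|`). -/
def tcard (q : ℕ) (R δ : ℝ) (n : ℕ) : ℕ :=
  ⌈(2 : ℝ) ^ ((n : ℝ) * (Real.logb 2 q - R + δ))⌉₊

/-- Total variation distance between the true joint pmf of `(B, X([n]))` (with
`X([n])` uniform on `𝒳ⁿ` and `B = 𝔅(X([n]))`) and the simulated joint pmf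
`p_B · p̃_{X([n])|B}`, where `p̃(xⁿ|b) = (1/|𝒯|)·∑_t 𝟙[φ(t,b) = xⁿ]`. -/
def tvSim {𝒳 : Type} [Fintype 𝒳] [DecidableEq 𝒳] (R δ : ℝ) (n : ℕ)
    (𝔅 : (Fin n → 𝒳) → Fin (nbR R n))
    (φ : Fin (tcard (Fintype.card 𝒳) R δ n) × Fin (nbR R n) → (Fin n → 𝒳)) : ℝ :=
  2⁻¹ * ∑ b : Fin (nbR R n), ∑ x : Fin n → 𝒳,
    |(if 𝔅 x = b then (Fintype.card (Fin n → 𝒳) : ℝ)⁻¹ else 0) -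
      (((univ.filter (fun y : Fin n → 𝒳 => 𝔅 y = b)).card : ℝ) /
          (Fintype.card (Fin n → 𝒳) : ℝ)) *
        ((Fintype.card (Fin (tcard (Fintype.card 𝒳) R δ n)) : ℝ)⁻¹ *
          ((univ.filter (fun τ : Fin (tcard (Fintype.card 𝒳) R δ n) =>
            φ (τ, b) = x)).card : ℝ))|

section Aux
variable {α β : Type} [Fintype α] [DecidableEq α] [Fintype β] [DecidableEq β]

lemma card_ne_sub (x : α) : Fintype.card {j : α // j ≠ x} = Fintype.card α - 1 := by
  rw [Fintype.card_subtype_compl, Fintype.card_subtype_eq]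

lemma card_filter_eval (x : α) (b : β) :
    ((univ : Finset (α → β)).filter fun f => f x = b).card
      = Fintype.card β ^ (Fintype.card α - 1) := by
  rw [← Fintype.card_subtype]
  have e : {f : α → β // f x = b} ≃ ({ j : α // j ≠ x } → β) :=
    { toFun := fun f j => f.1 j
      invFun := fun g => ⟨fun a => if h : a = x then b else g ⟨a, h⟩, by simp⟩
      left_inv := by
        rintro ⟨f, hf⟩
        ext a
        dsimp only
        by_cases h : a = x
        · subst h; simp [hf]
        · simp [h]
      right_inv := by
        intro g; ext j; exact dif_neg j.2 }
  rw [Fintype.card_congr e, Fintype.card_fun, card_ne_sub]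

lemma card_filter_eval_pair {x y : α} (hxy : x ≠ y) (b : β) :
    ((univ : Finset (α → β)).filter fun f => f x = b ∧ f y = b).card
      = Fintype.card β ^ (Fintype.card α - 2) := by
  rw [← Fintype.card_subtype]
  have e : {f : α → β // f x = b ∧ f y = b}
      ≃ {g : {j : α // j ≠ x} → β // g ⟨y, Ne.symm hxy⟩ = b} :=
    { toFun := fun f => ⟨fun j => f.1 j, f.2.2⟩
      invFun := fun g => ⟨fun a => if h : a = x then b else g.1 ⟨a, h⟩,
        by simp, by simp only []; rw [dif_neg (Ne.symm hxy)]; exact g.2⟩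
      left_inv := by
        rintro ⟨f, hf1, hf2⟩
        ext a
        dsimp only
        by_cases h : a = x
        · subst h; simp [hf1]
        · simp [h]
      right_inv := by
        intro g; ext j; exact dif_neg j.2 }
  rw [Fintype.card_congr e, Fintype.card_subtype]
  have := card_filter_eval (α := {j : α // j ≠ x}) (β := β) ⟨y, Ne.symm hxy⟩ b
  rw [this, card_ne_sub]
  congr 1

lemma count_mod_le (T N i : ℕ) :
    (((range T).filter fun t => t % N = i)).card ≤ T / N + 1 := by
  have hmaps : ∀ t ∈ (range T).filter fun t => t % N = i,
      t / N ∈ range (T / N + 1) := by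
    intro t ht
    simp only [mem_filter, mem_range] at ht ⊢
    exact Nat.lt_succ_of_le (Nat.div_le_div_right ht.1.le)
  have hinj : ∀ a ∈ (range T).filter fun t => t % N = i,
      ∀ b ∈ (range T).filter fun t => t % N = i, a / N = b / N → a = b := by
    intro a ha b hb hab
    simp only [mem_filter, mem_range] at ha hb
    have h1 := Nat.div_add_mod a N
    have h2 := Nat.div_add_mod b N
    have h3 : N * (a / N) = N * (b / N) := by rw [hab]
    omega
  calc (((range T).filter fun t => t % N = i)).card
      ≤ (range (T / N + 1)).card := Finset.card_le_card_of_injOn _ hmaps hinj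
    _ = T / N + 1 := card_range _

lemma le_count_mod (T N i : ℕ) (hi : i < N) :
    T / N ≤ (((range T).filter fun t => t % N = i)).card := by
  have hmaps : ∀ k ∈ range (T / N), i + N * k ∈ (range T).filter fun t => t % N = i := by
    intro k hk
    simp only [mem_range] at hk
    simp only [mem_filter, mem_range]
    constructor
    · have h1 : N * (k + 1) ≤ N * (T / N) := Nat.mul_le_mul_left _ hk
      have h2 : N * (T / N) ≤ T := Nat.mul_div_le T N
      have h3 : N * (k + 1) = N * k + N := by ring
      omega
    · rw [Nat.add_mul_mod_self_left, Nat.mod_eq_of_lt hi]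
  have hinj : ∀ a ∈ range (T / N), ∀ b ∈ range (T / N),
      i + N * a = i + N * b → a = b := by
    intro a _ b _ h
    have hN : 0 < N := lt_of_le_of_lt (Nat.zero_le i) hi
    have : N * a = N * b := by omega
    exact Nat.eq_of_mul_eq_mul_left hN this
  calc T / N = (range (T / N)).card := (card_range _).symm
    _ ≤ _ := Finset.card_le_card_of_injOn _ hmaps hinj

lemma sum_card_sq :
    ∑ f : α → β, ∑ b : β, ((univ.filter fun x => f x = b).card) ^ 2
      = Fintype.card β * (Fintype.card α * Fintype.card β ^ (Fintype.card α - 1)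
          + (Fintype.card α * (Fintype.card α - 1)) * Fintype.card β ^ (Fintype.card α - 2)) := by
  rw [Finset.sum_comm]
  have hb : ∀ b : β, ∑ f : α → β, ((univ.filter fun x => f x = b).card) ^ 2
      = Fintype.card α * Fintype.card β ^ (Fintype.card α - 1)
          + (Fintype.card α * (Fintype.card α - 1)) * Fintype.card β ^ (Fintype.card α - 2) := by
    intro b
    have h1 : ∀ f : α → β, ((univ.filter fun x => f x = b).card) ^ 2
        = ∑ x : α, ∑ y : α, (if f x = b ∧ f y = b then 1 else 0) := by
      intro f
      rw [Finset.card_filter, sq, Finset.sum_mul_sum]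
      refine Finset.sum_congr rfl fun x _ => Finset.sum_congr rfl fun y _ => ?_
      by_cases hx : f x = b <;> by_cases hy : f y = b <;> simp [hx, hy]
    calc ∑ f : α → β, ((univ.filter fun x => f x = b).card) ^ 2
        = ∑ x : α, ∑ y : α, ∑ f : α → β, (if f x = b ∧ f y = b then 1 else 0) := by
          simp_rw [h1]
          rw [Finset.sum_comm]
          exact Finset.sum_congr rfl fun x _ => Finset.sum_comm
      _ = ∑ x : α, ∑ y : α, (if x = y then Fintype.card β ^ (Fintype.card α - 1)
            else Fintype.card β ^ (Fintype.card α - 2)) := by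
          refine Finset.sum_congr rfl fun x _ => Finset.sum_congr rfl fun y _ => ?_
          by_cases hxy : x = y
          · subst hxy
            rw [if_pos rfl, ← card_filter_eval x b, Finset.card_filter]
            exact Finset.sum_congr rfl fun f _ => by simp
          · rw [if_neg hxy, ← card_filter_eval_pair hxy b, Finset.card_filter]
      _ = ∑ _x : α, (Fintype.card β ^ (Fintype.card α - 1)
            + (Fintype.card α - 1) * Fintype.card β ^ (Fintype.card α - 2)) := by
          refine Finset.sum_congr rfl fun x _ => ?_
          rw [← Finset.add_sum_erase _ _ (mem_univ x), if_pos rfl]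
          congr 1
          rw [Finset.sum_congr rfl (fun y hy => if_neg (fun h => (Finset.ne_of_mem_erase hy) h.symm)),
            Finset.sum_const, Finset.card_erase_of_mem (mem_univ x), card_univ, smul_eq_mul]
      _ = Fintype.card α * Fintype.card β ^ (Fintype.card α - 1)
          + (Fintype.card α * (Fintype.card α - 1)) * Fintype.card β ^ (Fintype.card α - 2) := by
          rw [Finset.sum_const, card_univ, smul_eq_mul]
          ring
  rw [Finset.sum_congr rfl fun b _ => hb b, Finset.sum_const, card_univ, smul_eq_mul]

lemma exists_phi {α : Type} [Fintype α] [DecidableEq α] [Nonempty α]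
    (Tn : ℕ) (hT : 0 < Tn) (s : Finset α) :
    ∃ φb : Fin Tn → α,
      ∑ x : α, |(if x ∈ s then (Fintype.card α : ℝ)⁻¹ else 0) -
          ((s.card : ℝ) / (Fintype.card α : ℝ)) *
            ((Tn : ℝ)⁻¹ *
              (((univ.filter fun τ : Fin Tn => φb τ = x).card : ℝ)))|
        ≤ (s.card : ℝ) ^ 2 / ((Fintype.card α : ℝ) * Tn) := by
  rcases eq_or_ne s ∅ with rfl | hs
  · refine ⟨fun _ => Classical.arbitrary α, ?_⟩
    simp
  · have hsne : s.Nonempty := nonempty_iff_ne_empty.2 hs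
    have hN : 0 < s.card := card_pos.2 hsne
    have hlen : s.toList.length = s.card := Finset.length_toList s
    have hgetlt : ∀ τ : Fin Tn, (τ : ℕ) % s.card < s.toList.length := by
      intro τ; rw [hlen]; exact Nat.mod_lt _ hN
    set φb : Fin Tn → α := fun τ => s.toList.get ⟨(τ : ℕ) % s.card, hgetlt τ⟩ with hφb
    refine ⟨φb, ?_⟩
    have hKr : (0:ℝ) < (Fintype.card α : ℝ) := by exact_mod_cast Fintype.card_pos
    have hTr : (0:ℝ) < (Tn : ℝ) := by exact_mod_cast hT
    have key : ∀ x : α,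
        |(if x ∈ s then (Fintype.card α : ℝ)⁻¹ else 0) -
          ((s.card : ℝ) / (Fintype.card α : ℝ)) *
            ((Tn : ℝ)⁻¹ * (((univ.filter fun τ : Fin Tn => φb τ = x).card : ℝ)))|
        ≤ if x ∈ s then (s.card : ℝ) / ((Fintype.card α : ℝ) * Tn) else 0 := by
      intro x
      by_cases hx : x ∈ s
      · obtain ⟨i, hi⟩ := List.mem_iff_get.1 (Finset.mem_toList.2 hx)
        have hiN : (i : ℕ) < s.card := by rw [← hlen]; exact i.isLt
        have hiff : ∀ τ : Fin Tn, φb τ = x ↔ (τ : ℕ) % s.card = (i : ℕ) := by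
          intro τ
          rw [hφb]
          constructor
          · intro h
            have h2 : (⟨(τ : ℕ) % s.card, hgetlt τ⟩ : Fin s.toList.length) = i :=
              (s.nodup_toList.get_inj_iff).1 (h.trans hi.symm)
            exact congrArg Fin.val h2
          · intro h
            have h2 : (⟨(τ : ℕ) % s.card, hgetlt τ⟩ : Fin s.toList.length) = i := Fin.ext h
            show s.toList.get ⟨(τ : ℕ) % s.card, hgetlt τ⟩ = x
            rw [h2, hi]
        have hcard : ((univ.filter fun τ : Fin Tn => φb τ = x).card)
            = (((range Tn).filter fun t => t % s.card = (i : ℕ))).card := by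
          refine Finset.card_bij (fun τ _ => (τ : ℕ)) ?_ ?_ ?_
          · intro τ hτ
            simp only [mem_filter, mem_univ, true_and] at hτ
            simp only [mem_filter, mem_range]
            exact ⟨τ.isLt, (hiff τ).1 hτ⟩
          · intro a _ b _ hab; exact Fin.ext hab
          · intro t ht
            simp only [mem_filter, mem_range] at ht
            exact ⟨⟨t, ht.1⟩, by
              simp only [mem_filter, mem_univ, true_and]
              exact (hiff _).2 ht.2, rfl⟩
        rw [if_pos hx, if_pos hx, hcard]
        set c := (((range Tn).filter fun t => t % s.card = (i : ℕ))).card with hc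
        have h1 : c ≤ Tn / s.card + 1 := count_mod_le _ _ _
        have h2 : Tn / s.card ≤ c := le_count_mod _ _ _ hiN
        have hub : s.card * c ≤ Tn + s.card := by
          have h3 := Nat.mul_le_mul_left s.card h1
          have h4 : s.card * (Tn / s.card + 1) = s.card * (Tn / s.card) + s.card := by ring
          have h5 : s.card * (Tn / s.card) ≤ Tn := Nat.mul_div_le Tn s.card
          omega
        have hlb : Tn ≤ s.card * c + s.card := by
          have h7 := Nat.div_add_mod Tn s.card
          have h8 : Tn % s.card < s.card := Nat.mod_lt _ hN
          have h9 : s.card * (Tn / s.card) ≤ s.card * c := Nat.mul_le_mul_left s.card h2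
          omega
        have hubR : (s.card : ℝ) * c ≤ (Tn : ℝ) + s.card := by exact_mod_cast hub
        have hlbR : (Tn : ℝ) ≤ (s.card : ℝ) * c + s.card := by exact_mod_cast hlb
        have habs : |(Tn : ℝ) - s.card * c| ≤ (s.card : ℝ) :=
          abs_le.2 ⟨by linarith, by linarith⟩
        have heq : (Fintype.card α : ℝ)⁻¹ -
            ((s.card : ℝ) / (Fintype.card α : ℝ)) * ((Tn : ℝ)⁻¹ * c)
            = ((Tn : ℝ) - s.card * c) / ((Fintype.card α : ℝ) * Tn) := by
          field_simp
        have hpos : (0:ℝ) < (Fintype.card α : ℝ) * Tn := by positivity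
        rw [heq, abs_div, abs_of_pos hpos]
        gcongr
      · rw [if_neg hx, if_neg hx]
        have hemp : (univ.filter fun τ : Fin Tn => φb τ = x) = ∅ := by
          rw [Finset.filter_eq_empty_iff]
          intro τ _
          intro h
          exact hx (h ▸ Finset.mem_toList.1 (s.toList.get_mem _))
        rw [hemp]
        simp
    calc ∑ x : α, |(if x ∈ s then (Fintype.card α : ℝ)⁻¹ else 0) -
          ((s.card : ℝ) / (Fintype.card α : ℝ)) *
            ((Tn : ℝ)⁻¹ * (((univ.filter fun τ : Fin Tn => φb τ = x).card : ℝ)))|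
        ≤ ∑ x : α, (if x ∈ s then (s.card : ℝ) / ((Fintype.card α : ℝ) * Tn) else 0) :=
          Finset.sum_le_sum fun x _ => key x
      _ = ∑ _x ∈ s, (s.card : ℝ) / ((Fintype.card α : ℝ) * Tn) := by
          rw [Finset.sum_ite_mem, univ_inter]
      _ = (s.card : ℝ) ^ 2 / ((Fintype.card α : ℝ) * Tn) := by
          rw [Finset.sum_const, nsmul_eq_mul]
          ring

end Aux

/-- **Channel simulation from a bin index.** For `X([n])` uniform i.i.d.
on `𝒳` (`|𝒳| ≥ 2`), a uniformly random binning `𝔅` at rate `R < log₂|𝒳|` and any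
`δ > 0`, there is `η > 0` so that for all large `n` one can pick, for each realization
of `𝔅`, a deterministic simulation function `φ : 𝒯 × bins → 𝒳ⁿ` using randomness of
rate `log₂|𝒳| − R + δ`, such that the expected total variation distance between the
true joint of `(B, X([n]))` and the simulated one is at most `2^{−ηn}`. -/
theorem channel_simulation_from_bin_index {𝒳 : Type} [Fintype 𝒳] [DecidableEq 𝒳]
    (hX : 2 ≤ Fintype.card 𝒳) (R δ : ℝ)
    (hR : R < Real.logb 2 (Fintype.card 𝒳)) (hδ : 0 < δ) :
    ∃ η : ℝ, 0 < η ∧ ∃ N : ℕ, ∀ n ≥ N,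
      ∃ φ : ((Fin n → 𝒳) → Fin (nbR R n)) →
          (Fin (tcard (Fintype.card 𝒳) R δ n) × Fin (nbR R n) → (Fin n → 𝒳)),
        (Fintype.card ((Fin n → 𝒳) → Fin (nbR R n)) : ℝ)⁻¹ *
            ∑ 𝔅 : (Fin n → 𝒳) → Fin (nbR R n), tvSim R δ n 𝔅 (φ 𝔅)
          ≤ (2 : ℝ) ^ (-(η * (n : ℝ))) := by
  refine ⟨δ, hδ, 1, fun n hn => ?_⟩
  have h𝒳 : Nonempty 𝒳 := Fintype.card_pos_iff.mp (by omega)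
  set L : ℝ := Real.logb 2 (Fintype.card 𝒳) with hL
  set Tn := tcard (Fintype.card 𝒳) R δ n with hTdef
  set Mn := nbR R n with hMdef
  have hTpos : 0 < Tn := Nat.ceil_pos.mpr (by positivity)
  have hMpos : 0 < Mn := Nat.ceil_pos.mpr (by positivity)
  have hMR_ge : (2 : ℝ) ^ ((n : ℝ) * R) ≤ (Mn : ℝ) := Nat.le_ceil _
  have hTR_ge : (2 : ℝ) ^ ((n : ℝ) * (L - R + δ)) ≤ (Tn : ℝ) := Nat.le_ceil _
  set K := Fintype.card (Fin n → 𝒳) with hK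
  have hKval : K = Fintype.card 𝒳 ^ n := by
    rw [hK, Fintype.card_fun, Fintype.card_fin]
  have hK2 : 2 ≤ K := by
    rw [hKval]
    have h1 : 2 ^ n ≤ Fintype.card 𝒳 ^ n := Nat.pow_le_pow_left hX n
    have h2 : 2 ^ 1 ≤ 2 ^ n := Nat.pow_le_pow_right (by norm_num) hn
    omega
  have H : ∀ (𝔅 : (Fin n → 𝒳) → Fin Mn) (b : Fin Mn),
      ∃ φb : Fin Tn → (Fin n → 𝒳),
        ∑ x : Fin n → 𝒳, |(if x ∈ univ.filter (fun y => 𝔅 y = b) then (K : ℝ)⁻¹ else 0) -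
            (((univ.filter (fun y => 𝔅 y = b)).card : ℝ) / (K : ℝ)) *
              ((Tn : ℝ)⁻¹ *
                (((univ.filter fun τ : Fin Tn => φb τ = x).card : ℝ)))|
          ≤ ((univ.filter (fun y => 𝔅 y = b)).card : ℝ) ^ 2 / ((K : ℝ) * Tn) :=
    fun 𝔅 b => exists_phi Tn hTpos _
  choose Φ hΦ using H
  refine ⟨fun 𝔅 p => Φ 𝔅 p.2 p.1, ?_⟩
  -- per-realization bound
  have tvb : ∀ 𝔅 : (Fin n → 𝒳) → Fin Mn, tvSim R δ n 𝔅 (fun p => Φ 𝔅 p.2 p.1)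
      ≤ 2⁻¹ * ∑ b : Fin Mn,
          (((univ.filter (fun y => 𝔅 y = b)).card : ℝ) ^ 2 / ((K : ℝ) * Tn)) := by
    intro 𝔅
    rw [tvSim]
    refine mul_le_mul_of_nonneg_left (Finset.sum_le_sum fun b _ => ?_) (by norm_num)
    have h := hΦ 𝔅 b
    simp only [mem_filter, mem_univ, true_and] at h
    simpa only [Fintype.card_fin] using h
  -- counting
  have hcnt : (∑ 𝔅 : (Fin n → 𝒳) → Fin Mn, ∑ b : Fin Mn,
        ((univ.filter fun x => 𝔅 x = b).card) ^ 2)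
      = Mn * (K * Mn ^ (K - 1) + (K * (K - 1)) * Mn ^ (K - 2)) := by
    have h := sum_card_sq (α := Fin n → 𝒳) (β := Fin Mn)
    simpa only [Fintype.card_fin, ← hK] using h
  clear_value K
  have e1 : Mn * Mn ^ (K - 1) = Mn ^ K := by
    have h : K - 1 + 1 = K := Nat.sub_add_cancel (le_trans one_le_two hK2)
    calc Mn * Mn ^ (K - 1) = Mn ^ (K - 1 + 1) := (pow_succ' Mn (K - 1)).symm
      _ = Mn ^ K := by rw [h]
  have e2 : Mn * Mn ^ (K - 2) = Mn ^ (K - 1) := by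
    have h : K - 2 + 1 = K - 1 := Nat.sub_add_cancel (Nat.le_sub_one_of_lt (lt_of_lt_of_le one_lt_two hK2))
    calc Mn * Mn ^ (K - 2) = Mn ^ (K - 2 + 1) := (pow_succ' Mn (K - 2)).symm
      _ = Mn ^ (K - 1) := by rw [h]
  have hcnt2 : (∑ 𝔅 : (Fin n → 𝒳) → Fin Mn, ∑ b : Fin Mn,
        ((univ.filter fun x => 𝔅 x = b).card) ^ 2)
      = K * Mn ^ K + (K * (K - 1)) * Mn ^ (K - 1) := by
    rw [hcnt]
    calc Mn * (K * Mn ^ (K - 1) + (K * (K - 1)) * Mn ^ (K - 2))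
        = K * (Mn * Mn ^ (K - 1)) + (K * (K - 1)) * (Mn * Mn ^ (K - 2)) := by ring
      _ = K * Mn ^ K + (K * (K - 1)) * Mn ^ (K - 1) := by rw [e1, e2]
  -- real constants
  have hKRpos : (0:ℝ) < (K : ℝ) := by exact_mod_cast Nat.lt_of_lt_of_le (by norm_num) hK2
  have hMRpos : (0:ℝ) < (Mn : ℝ) := by exact_mod_cast hMpos
  have hTRpos : (0:ℝ) < (Tn : ℝ) := by exact_mod_cast hTpos
  have hsumR : ∑ 𝔅 : (Fin n → 𝒳) → Fin Mn, ∑ b : Fin Mn,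
        (((univ.filter fun x => 𝔅 x = b).card : ℝ)) ^ 2
      = (K : ℝ) * (Mn : ℝ) ^ K + ((K * (K - 1) : ℕ) : ℝ) * (Mn : ℝ) ^ (K - 1) := by
    exact_mod_cast congrArg (Nat.cast : ℕ → ℝ) hcnt2
  have hcardfun : (Fintype.card ((Fin n → 𝒳) → Fin Mn) : ℝ) = (Mn : ℝ) ^ K := by
    rw [Fintype.card_fun, Fintype.card_fin, ← hK]
    push_cast
    rfl
  have e1R : (Mn : ℝ) * (Mn : ℝ) ^ (K - 1) = (Mn : ℝ) ^ K := by exact_mod_cast e1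
  -- main chain
  have step1 : (Fintype.card ((Fin n → 𝒳) → Fin Mn) : ℝ)⁻¹ *
        ∑ 𝔅 : (Fin n → 𝒳) → Fin Mn, tvSim R δ n 𝔅 (fun p => Φ 𝔅 p.2 p.1)
      ≤ 2⁻¹ * (Tn : ℝ)⁻¹ * (1 + (K : ℝ) / (Mn : ℝ)) := by
    calc (Fintype.card ((Fin n → 𝒳) → Fin Mn) : ℝ)⁻¹ *
          ∑ 𝔅 : (Fin n → 𝒳) → Fin Mn, tvSim R δ n 𝔅 (fun p => Φ 𝔅 p.2 p.1)
        ≤ (Fintype.card ((Fin n → 𝒳) → Fin Mn) : ℝ)⁻¹ *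
          ∑ 𝔅 : (Fin n → 𝒳) → Fin Mn, (2⁻¹ * ∑ b : Fin Mn,
            (((univ.filter (fun y => 𝔅 y = b)).card : ℝ) ^ 2 / ((K : ℝ) * Tn))) := by
          refine mul_le_mul_of_nonneg_left (Finset.sum_le_sum fun 𝔅 _ => tvb 𝔅)
            (by positivity)
      _ = ((Mn : ℝ) ^ K)⁻¹ * (2⁻¹ *
            ((((K : ℝ) * (Mn : ℝ) ^ K + ((K * (K - 1) : ℕ) : ℝ) * (Mn : ℝ) ^ (K - 1)))
              / ((K : ℝ) * Tn))) := by
          rw [hcardfun, ← Finset.mul_sum]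
          congr 2
          rw [← hsumR]
          simp_rw [← Finset.sum_div]
      _ ≤ ((Mn : ℝ) ^ K)⁻¹ * (2⁻¹ *
            ((((K : ℝ) * (Mn : ℝ) ^ K + (K : ℝ) * (K : ℝ) * (Mn : ℝ) ^ (K - 1)))
              / ((K : ℝ) * Tn))) := by
          have hc : ((K * (K - 1) : ℕ) : ℝ) ≤ (K : ℝ) * (K : ℝ) := by
            have : (K * (K - 1) : ℕ) ≤ K * K := Nat.mul_le_mul_left _ (Nat.sub_le _ _)
            exact_mod_cast this
          gcongr
      _ = 2⁻¹ * (Tn : ℝ)⁻¹ * (1 + (K : ℝ) / (Mn : ℝ)) := by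
          rw [← e1R]
          field_simp
  refine step1.trans ?_
  -- analytic estimates
  have hKR_eq : (K : ℝ) = (2 : ℝ) ^ ((n : ℝ) * L) := by
    have h2q : (2 : ℝ) ^ L = (Fintype.card 𝒳 : ℝ) :=
      Real.rpow_logb (by norm_num) (by norm_num) (by positivity)
    rw [hKval]
    push_cast
    rw [← h2q, ← Real.rpow_natCast ((2:ℝ) ^ L) n, ← Real.rpow_mul (by norm_num)]
    ring_nf
  have hLR : 0 < L - R := by simp [hL]; linarith
  have hn1 : (1 : ℝ) ≤ (n : ℝ) := by exact_mod_cast hn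
  have hKM : (K : ℝ) / (Mn : ℝ) ≤ (2 : ℝ) ^ ((n : ℝ) * (L - R)) := by
    rw [hKR_eq]
    calc (2 : ℝ) ^ ((n : ℝ) * L) / (Mn : ℝ)
        ≤ (2 : ℝ) ^ ((n : ℝ) * L) / (2 : ℝ) ^ ((n : ℝ) * R) := by
          gcongr
      _ = (2 : ℝ) ^ ((n : ℝ) * (L - R)) := by
          rw [← Real.rpow_sub (by norm_num)]
          ring_nf
  have h1le : (1 : ℝ) ≤ (2 : ℝ) ^ ((n : ℝ) * (L - R)) := by
    rw [show (1:ℝ) = (2:ℝ) ^ (0:ℝ) by rw [Real.rpow_zero]]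
    apply Real.rpow_le_rpow_of_exponent_le (by norm_num)
    positivity
  calc 2⁻¹ * (Tn : ℝ)⁻¹ * (1 + (K : ℝ) / (Mn : ℝ))
      ≤ 2⁻¹ * ((2 : ℝ) ^ ((n : ℝ) * (L - R + δ)))⁻¹ *
        (2 * (2 : ℝ) ^ ((n : ℝ) * (L - R))) := by
        have hTinv : (Tn : ℝ)⁻¹ ≤ ((2 : ℝ) ^ ((n : ℝ) * (L - R + δ)))⁻¹ :=
          inv_anti₀ (by positivity) hTR_ge
        have hnum : 1 + (K : ℝ) / (Mn : ℝ) ≤ 2 * (2 : ℝ) ^ ((n : ℝ) * (L - R)) := by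
          have := hKM
          linarith
        have h0 : (0:ℝ) ≤ 1 + (K : ℝ) / (Mn : ℝ) := by positivity
        have h1 : (0:ℝ) ≤ 2⁻¹ * ((2 : ℝ) ^ ((n : ℝ) * (L - R + δ)))⁻¹ := by positivity
        calc 2⁻¹ * (Tn : ℝ)⁻¹ * (1 + (K : ℝ) / (Mn : ℝ))
            ≤ 2⁻¹ * ((2 : ℝ) ^ ((n : ℝ) * (L - R + δ)))⁻¹ * (1 + (K : ℝ) / (Mn : ℝ)) := by
              apply mul_le_mul_of_nonneg_right _ h0
              exact mul_le_mul_of_nonneg_left hTinv (by norm_num)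
          _ ≤ _ := mul_le_mul_of_nonneg_left hnum h1
    _ = (2 : ℝ) ^ (-(δ * (n : ℝ))) := by
        rw [show 2⁻¹ * ((2 : ℝ) ^ ((n : ℝ) * (L - R + δ)))⁻¹ *
            (2 * (2 : ℝ) ^ ((n : ℝ) * (L - R)))
          = (2 : ℝ) ^ ((n : ℝ) * (L - R)) / (2 : ℝ) ^ ((n : ℝ) * (L - R + δ)) by ring]
        rw [← Real.rpow_sub (by norm_num)]
        congr 1
        ring
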